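/- Squeeze inequality for cumulative relative delays: in the deterministic sequence setting where X_{i,s} = Σ_{t=1}^∞ 1{A_t = i, t ≤ s < t + D_{i,t}}, the bounds Σ_{t=1}^T X_{i,t} ≤ Σ_{t=1}^T D_{i,t} ≤ Σ_{t=1}^{T+R_{i,T}} X_{i,t} hold for each T ≥ 1, where D_{i,t} = 1{A_t = i}·R_{i,t} and D_{i,t} ≤ R_{i,T} + (T − t) for t ≤ T whenever A_t = i. -/
import Mathlib


open Finset

/-- Squeeze inequality for cumulative relative delays. Here `a t` says that
round `t ≥ 1` routes a task to the fixed client `i` (`A_t = i`), `R t = R_{i,t}`,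
`D t = D_{i,t} = 1{A_t = i}·R_{i,t}`, and `X s = X_{i,s}` admits the representation
`X_{i,s} = Σ_{t≥1} 1{A_t = i, t ≤ s < t + D_{i,t}}` (only `1 ≤ t ≤ s` can contribute).
Then `Σ_{t=1}^T X_{i,t} ≤ Σ_{t=1}^T D_{i,t} ≤ Σ_{t=1}^{T+R_{i,T}} X_{i,t}`. -/
theorem squeeze_cumulative_delays
    (a : ℕ → Prop) [DecidablePred a] (R D X : ℕ → ℕ)
    (hD : ∀ t, D t = if a t then R t else 0)
    (hX : ∀ s, X s = ∑ t ∈ Finset.Icc 1 s, (if a t ∧ s < t + D t then 1 else 0))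
    (hbound : ∀ T, ∀ t ∈ Finset.Icc 1 T, a t → D t ≤ R T + (T - t))
    (T : ℕ) (hT : 1 ≤ T) :
    ∑ t ∈ Finset.Icc 1 T, X t ≤ ∑ t ∈ Finset.Icc 1 T, D t ∧
    ∑ t ∈ Finset.Icc 1 T, D t ≤ ∑ t ∈ Finset.Icc 1 (T + R T), X t := by
  have key : ∀ S, ∑ s ∈ Finset.Icc 1 S, X s
      = ∑ t ∈ Finset.Icc 1 S, ∑ s ∈ Finset.Icc 1 S,
          (if t ≤ s ∧ a t ∧ s < t + D t then 1 else 0) := by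
    intro S
    rw [Finset.sum_comm]
    refine Finset.sum_congr rfl fun s hs => ?_
    rw [hX s]
    simp only [Finset.mem_Icc] at hs
    rw [← Finset.sum_subset (Finset.Icc_subset_Icc_right hs.2)
      (fun t ht hnt => by
        simp only [Finset.mem_Icc] at ht hnt
        have : ¬ t ≤ s := fun h => hnt ⟨ht.1, h⟩
        simp [this])]
    refine Finset.sum_congr rfl fun t ht => ?_
    simp only [Finset.mem_Icc] at ht
    simp [ht.2]
  -- inner sum upper bound
  have hupper : ∀ S t, ∑ s ∈ Finset.Icc 1 S,
      (if t ≤ s ∧ a t ∧ s < t + D t then 1 else 0) ≤ D t := by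
    intro S t
    classical
    rw [Finset.sum_boole]
    push_cast
    calc ((Finset.Icc 1 S).filter (fun s => t ≤ s ∧ a t ∧ s < t + D t)).card
        ≤ (Finset.Ico t (t + D t)).card := by
          apply Finset.card_le_card
          intro s hs
          simp only [Finset.mem_filter, Finset.mem_Ico] at hs ⊢
          exact ⟨hs.2.1, hs.2.2.2⟩
      _ = D t := by simp
  constructor
  · rw [key T]
    exact Finset.sum_le_sum fun t _ => hupper T t
  · rw [key (T + R T)]
    have hsub : Finset.Icc 1 T ⊆ Finset.Icc 1 (T + R T) :=
      Finset.Icc_subset_Icc_right (Nat.le_add_right _ _)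
    refine le_trans ?_ (Finset.sum_le_sum_of_subset hsub)
    refine Finset.sum_le_sum fun t ht => ?_
    by_cases hat : a t
    · have hmem := ht
      simp only [Finset.mem_Icc] at hmem
      have hDle : D t ≤ R T + (T - t) := hbound T t ht hat
      have h2 : t + D t ≤ 1 + (T + R T) := by omega
      have hsub2 : Finset.Ico t (t + D t) ⊆ Finset.Icc 1 (T + R T) := by
        intro s hs
        simp only [Finset.mem_Ico, Finset.mem_Icc] at hs ⊢
        omega
      have hone : ∀ s ∈ Finset.Ico t (t + D t),
          (if t ≤ s ∧ a t ∧ s < t + D t then 1 else 0) = 1 := by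
        intro s hs
        simp only [Finset.mem_Ico] at hs
        simp [hs.1, hs.2, hat]
      calc D t = ∑ s ∈ Finset.Ico t (t + D t),
            (if t ≤ s ∧ a t ∧ s < t + D t then 1 else 0) := by
            rw [Finset.sum_congr rfl hone]; simp
        _ ≤ _ := Finset.sum_le_sum_of_subset hsub2
    · simp [hD t, hat]
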